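/- The substitution x_i = (f_j f_k)² transforms the system (f₁f₂)' = f f₃, (f₁f₃)' = f f₂, (f₂f₃)' = f f₁ into dx_i/dr = 2(x₁x₂x₃)^{1/4} for each i, where dr = f dt; in particular, the differences x_i - x_j are constant along solutions. -/

import Mathlib

/-- The substitution `xᵢ = (fⱼfₖ)²` transforms the system `(f₁f₂)' = f f₃`, etc.,
into `xᵢ' = 2 f (x₁x₂x₃)^{1/4}` for each `i`, and the differences `xᵢ - xⱼ` are constant. -/
theorem stmt_4 (f f₁ f₂ f₃ : ℝ → ℝ)
    (hf : ∀ t, 0 < f t) (h1 : ∀ t, 0 < f₁ t) (h2 : ∀ t, 0 < f₂ t) (h3 : ∀ t, 0 < f₃ t)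
    (e1 : ∀ t, HasDerivAt (fun s => f₁ s * f₂ s) (f t * f₃ t) t)
    (e2 : ∀ t, HasDerivAt (fun s => f₁ s * f₃ s) (f t * f₂ t) t)
    (e3 : ∀ t, HasDerivAt (fun s => f₂ s * f₃ s) (f t * f₁ t) t) :
    (∀ t, HasDerivAt (fun s => (f₂ s * f₃ s) ^ 2)
      (2 * f t * ((f₂ t * f₃ t) ^ 2 * (f₁ t * f₃ t) ^ 2 * (f₁ t * f₂ t) ^ 2) ^ ((1:ℝ)/4)) t) ∧
    (∀ t, HasDerivAt (fun s => (f₁ s * f₃ s) ^ 2)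
      (2 * f t * ((f₂ t * f₃ t) ^ 2 * (f₁ t * f₃ t) ^ 2 * (f₁ t * f₂ t) ^ 2) ^ ((1:ℝ)/4)) t) ∧
    (∀ t, HasDerivAt (fun s => (f₁ s * f₂ s) ^ 2)
      (2 * f t * ((f₂ t * f₃ t) ^ 2 * (f₁ t * f₃ t) ^ 2 * (f₁ t * f₂ t) ^ 2) ^ ((1:ℝ)/4)) t) ∧
    (∀ t s, (f₂ t * f₃ t) ^ 2 - (f₁ t * f₃ t) ^ 2 =
      (f₂ s * f₃ s) ^ 2 - (f₁ s * f₃ s) ^ 2) ∧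
    (∀ t s, (f₁ t * f₃ t) ^ 2 - (f₁ t * f₂ t) ^ 2 =
      (f₁ s * f₃ s) ^ 2 - (f₁ s * f₂ s) ^ 2) := by
  have hroot : ∀ t, ((f₂ t * f₃ t) ^ 2 * (f₁ t * f₃ t) ^ 2 * (f₁ t * f₂ t) ^ 2) ^ ((1:ℝ)/4)
      = f₁ t * f₂ t * f₃ t := by
    intro t
    have hP : (0:ℝ) < f₁ t * f₂ t * f₃ t := mul_pos (mul_pos (h1 t) (h2 t)) (h3 t)
    have h4 : (f₂ t * f₃ t) ^ 2 * (f₁ t * f₃ t) ^ 2 * (f₁ t * f₂ t) ^ 2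
        = (f₁ t * f₂ t * f₃ t) ^ (4:ℕ) := by ring
    rw [h4, ← Real.rpow_natCast (f₁ t * f₂ t * f₃ t) 4,
      ← Real.rpow_mul hP.le]
    norm_num
  have d1 : ∀ t, HasDerivAt (fun s => (f₂ s * f₃ s) ^ 2)
      (2 * f t * ((f₂ t * f₃ t) ^ 2 * (f₁ t * f₃ t) ^ 2 * (f₁ t * f₂ t) ^ 2) ^ ((1:ℝ)/4)) t := by
    intro t
    have := (show HasDerivAt (fun s => (f₂ s * f₃ s) ^ 2) _ t from (e3 t).fun_pow 2)
    convert this using 1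
    rw [hroot t]; ring
  have d2 : ∀ t, HasDerivAt (fun s => (f₁ s * f₃ s) ^ 2)
      (2 * f t * ((f₂ t * f₃ t) ^ 2 * (f₁ t * f₃ t) ^ 2 * (f₁ t * f₂ t) ^ 2) ^ ((1:ℝ)/4)) t := by
    intro t
    have := (show HasDerivAt (fun s => (f₁ s * f₃ s) ^ 2) _ t from (e2 t).fun_pow 2)
    convert this using 1
    rw [hroot t]; ring
  have d3 : ∀ t, HasDerivAt (fun s => (f₁ s * f₂ s) ^ 2)
      (2 * f t * ((f₂ t * f₃ t) ^ 2 * (f₁ t * f₃ t) ^ 2 * (f₁ t * f₂ t) ^ 2) ^ ((1:ℝ)/4)) t := by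
    intro t
    have := (show HasDerivAt (fun s => (f₁ s * f₂ s) ^ 2) _ t from (e1 t).fun_pow 2)
    convert this using 1
    rw [hroot t]; ring
  have const : ∀ (g h : ℝ → ℝ),
      (∀ t, HasDerivAt g (2 * f t * ((f₂ t * f₃ t) ^ 2 * (f₁ t * f₃ t) ^ 2 * (f₁ t * f₂ t) ^ 2) ^ ((1:ℝ)/4)) t) →
      (∀ t, HasDerivAt h (2 * f t * ((f₂ t * f₃ t) ^ 2 * (f₁ t * f₃ t) ^ 2 * (f₁ t * f₂ t) ^ 2) ^ ((1:ℝ)/4)) t) →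
      ∀ t s, g t - h t = g s - h s := by
    intro g h hg hh t s
    have hz : ∀ u, HasDerivAt (fun x => g x - h x) 0 u := by
      intro u
      simpa using (hg u).fun_sub (hh u)
    have : ∀ u v, (fun x => g x - h x) u = (fun x => g x - h x) v := by
      intro u v
      exact is_const_of_deriv_eq_zero (fun x => (hz x).differentiableAt)
        (fun x => (hz x).deriv) u v
    exact this t s
  exact ⟨d1, d2, d3, const _ _ d1 d2, const _ _ d2 d3⟩
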